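/- (Softmax is 1-Lipschitz.) For every m ≥ 1, the softmax function ψ : ℝ^m → ℝ^m is Lipschitz continuous with Lipschitz constant 1 with respect to the Euclidean norm: ‖ψ(x) − ψ(y)‖₂ ≤ ‖x − y‖₂ for all x, y ∈ ℝ^m. -/

import Mathlib

noncomputable section

/-- The softmax function `ψ : ℝ^m → ℝ^m`, `ψ_i(y) = exp(y_i) / ∑_j exp(y_j)`. -/
def softmax {m : ℕ} (y : Fin m → ℝ) : Fin m → ℝ :=
  fun i => Real.exp (y i) / ∑ j, Real.exp (y j)

namespace SoftmaxAux

variable {m : ℕ}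

/-- The key quadratic inequality. -/
lemma key_sum (p v : Fin m → ℝ) (hp : ∀ i, 0 ≤ p i) (hs : ∑ i, p i = 1) :
    ∑ i, (p i * (v i - ∑ j, p j * v j)) ^ 2 ≤ ∑ i, v i ^ 2 := by
  have hp1 : ∀ i, p i ≤ 1 := by
    intro i
    calc p i ≤ ∑ j, p j := Finset.single_le_sum (fun j _ => hp j) (Finset.mem_univ i)
    _ = 1 := hs
  set c := ∑ j, p j * v j with hc
  have h1 : ∑ i, (p i * (v i - c)) ^ 2 ≤ ∑ i, p i * (v i - c) ^ 2 := by
    apply Finset.sum_le_sum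
    intro i _
    have h := sq_nonneg (v i - c)
    have : (p i * (v i - c)) ^ 2 = p i ^ 2 * (v i - c) ^ 2 := by ring
    rw [this]
    have hle : p i ^ 2 ≤ p i := by nlinarith [hp i, hp1 i]
    exact mul_le_mul_of_nonneg_right hle h
  have h2 : ∑ i, p i * (v i - c) ^ 2 = (∑ i, p i * v i ^ 2) - c ^ 2 := by
    have : ∀ i, p i * (v i - c) ^ 2 = p i * v i ^ 2 - 2 * c * (p i * v i) + c ^ 2 * p i := by
      intro i; ring
    rw [Finset.sum_congr rfl (fun i _ => this i)]
    rw [Finset.sum_add_distrib, Finset.sum_sub_distrib, ← Finset.mul_sum, ← Finset.mul_sum,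
      hs, ← hc]
    ring
  have h3 : ∑ i, p i * v i ^ 2 ≤ ∑ i, v i ^ 2 := by
    apply Finset.sum_le_sum
    intro i _
    nlinarith [hp i, hp1 i, sq_nonneg (v i)]
  nlinarith [sq_nonneg c]


/-- The derivative of softmax at `y`, as a continuous linear map on the Pi type. -/
def D (y : Fin m → ℝ) : (Fin m → ℝ) →L[ℝ] (Fin m → ℝ) :=
  ContinuousLinearMap.pi fun i =>
    softmax y i • (ContinuousLinearMap.proj i
      - ∑ j, softmax y j • ContinuousLinearMap.proj (R := ℝ) (φ := fun _ : Fin m => ℝ) j)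

lemma D_apply (y v : Fin m → ℝ) (i : Fin m) :
    D y v i = softmax y i * (v i - ∑ j, softmax y j * v j) := by
  simp [D, ContinuousLinearMap.pi_apply, ContinuousLinearMap.sum_apply, smul_eq_mul]

lemma S_pos (hm : 1 ≤ m) (y : Fin m → ℝ) : 0 < ∑ j, Real.exp (y j) := by
  have : Nonempty (Fin m) := ⟨⟨0, hm⟩⟩
  exact Finset.sum_pos (fun j _ => Real.exp_pos _) Finset.univ_nonempty

lemma softmax_nonneg (hm : 1 ≤ m) (y : Fin m → ℝ) (i : Fin m) : 0 ≤ softmax y i :=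
  div_nonneg (Real.exp_pos _).le (S_pos hm y).le

lemma softmax_sum_one (hm : 1 ≤ m) (y : Fin m → ℝ) : ∑ i, softmax y i = 1 := by
  simp only [softmax]
  rw [← Finset.sum_div]
  exact div_self (S_pos hm y).ne'

lemma hasFDerivAt_softmax (hm : 1 ≤ m) (y : Fin m → ℝ) :
    HasFDerivAt softmax (D y) y := by
  have hS : (∑ j, Real.exp (y j)) ≠ 0 := (S_pos hm y).ne'
  apply hasFDerivAt_pi.2
  intro i
  have h1 : HasFDerivAt (fun y : Fin m → ℝ => Real.exp (y i))
      (Real.exp (y i) • ContinuousLinearMap.proj (R := ℝ) (φ := fun _ : Fin m => ℝ) i) y :=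
    (hasFDerivAt_apply i y).exp
  have h2 : HasFDerivAt (fun y : Fin m → ℝ => ∑ j, Real.exp (y j))
      (∑ j, Real.exp (y j) • ContinuousLinearMap.proj (R := ℝ) (φ := fun _ : Fin m => ℝ) j)
      y := by
    apply HasFDerivAt.fun_sum
    intro j _
    exact (hasFDerivAt_apply j y).exp
  have hinv : HasFDerivAt (fun y : Fin m → ℝ => (∑ j, Real.exp (y j))⁻¹)
      ((-((∑ j, Real.exp (y j)) ^ 2)⁻¹) • (∑ j, Real.exp (y j) •
        ContinuousLinearMap.proj (R := ℝ) (φ := fun _ : Fin m => ℝ) j)) y :=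
    (hasDerivAt_inv hS).comp_hasFDerivAt y h2
  have hmul := h1.fun_mul hinv
  have heq : (fun x : Fin m → ℝ => softmax x i)
      = fun x : Fin m → ℝ => Real.exp (x i) * (∑ j, Real.exp (x j))⁻¹ := by
    funext x; simp [softmax, div_eq_mul_inv]
  rw [heq]
  refine hmul.congr_fderiv ?_
  ext v
  simp only [ContinuousLinearMap.pi_apply, ContinuousLinearMap.smul_apply,
    ContinuousLinearMap.sub_apply, ContinuousLinearMap.sum_apply, ContinuousLinearMap.add_apply,
    ContinuousLinearMap.neg_apply, ContinuousLinearMap.proj_apply, smul_eq_mul, softmax,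
    neg_mul, mul_neg]
  set S := ∑ j, Real.exp (y j) with hSdef
  have hrw : ∀ x : Fin m, Real.exp (y x) / S * v x = (Real.exp (y x) * v x) / S := by
    intro x; ring
  rw [Finset.sum_congr rfl fun x _ => hrw x, ← Finset.sum_div]
  set T := ∑ j, Real.exp (y j) * v j with hTdef
  field_simp
  ring

end SoftmaxAux

/-- **Softmax is 1-Lipschitz** with respect to the Euclidean norm on `ℝ^m`:
`‖ψ(x) − ψ(y)‖₂ ≤ ‖x − y‖₂` for all `x, y ∈ ℝ^m`. -/
theorem softmax_lipschitzWith_one (m : ℕ) (hm : 1 ≤ m) :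
    LipschitzWith 1 (fun y : EuclideanSpace ℝ (Fin m) =>
      ((WithLp.equiv 2 (Fin m → ℝ)).symm
        (softmax ((WithLp.equiv 2 (Fin m → ℝ)) y)) : EuclideanSpace ℝ (Fin m))) := by
  set e := PiLp.continuousLinearEquiv 2 ℝ (fun _ : Fin m => ℝ) with he
  have hfd : ∀ y : EuclideanSpace ℝ (Fin m),
      HasFDerivAt (fun y : EuclideanSpace ℝ (Fin m) =>
        ((WithLp.equiv 2 (Fin m → ℝ)).symm
          (softmax ((WithLp.equiv 2 (Fin m → ℝ)) y)) : EuclideanSpace ℝ (Fin m)))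
      ((e.symm : (Fin m → ℝ) →L[ℝ] EuclideanSpace ℝ (Fin m)).comp
        ((SoftmaxAux.D (e y)).comp
          (e : EuclideanSpace ℝ (Fin m) →L[ℝ] (Fin m → ℝ)))) y := by
    intro y
    exact (e.symm.toContinuousLinearMap.hasFDerivAt).comp y
      ((SoftmaxAux.hasFDerivAt_softmax hm (e y)).comp y
        e.toContinuousLinearMap.hasFDerivAt)
  have hb : ∀ y : EuclideanSpace ℝ (Fin m),
      ‖(e.symm : (Fin m → ℝ) →L[ℝ] EuclideanSpace ℝ (Fin m)).comp
        ((SoftmaxAux.D (e y)).comp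
          (e : EuclideanSpace ℝ (Fin m) →L[ℝ] (Fin m → ℝ)))‖ ≤ 1 := by
    intro y
    apply ContinuousLinearMap.opNorm_le_bound _ zero_le_one
    intro v
    rw [one_mul, EuclideanSpace.norm_eq, EuclideanSpace.norm_eq]
    apply Real.sqrt_le_sqrt
    have key := SoftmaxAux.key_sum (softmax (e y)) (e v)
      (SoftmaxAux.softmax_nonneg hm (e y)) (SoftmaxAux.softmax_sum_one hm (e y))
    calc ∑ i, ‖((e.symm : (Fin m → ℝ) →L[ℝ] EuclideanSpace ℝ (Fin m)).comp
            ((SoftmaxAux.D (e y)).comp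
              (e : EuclideanSpace ℝ (Fin m) →L[ℝ] (Fin m → ℝ))) v) i‖ ^ 2
        = ∑ i, (softmax (e y) i * ((e v) i - ∑ j, softmax (e y) j * (e v) j)) ^ 2 := by
          apply Finset.sum_congr rfl
          intro i _
          rw [Real.norm_eq_abs, sq_abs]
          congr 1
          exact SoftmaxAux.D_apply (e y) (e v) i
      _ ≤ ∑ i, (e v) i ^ 2 := key
      _ = ∑ i, ‖v i‖ ^ 2 := by
          apply Finset.sum_congr rfl
          intro i _
          rw [Real.norm_eq_abs, sq_abs]
          rfl
  apply lipschitzWith_of_nnnorm_fderiv_le (fun y => (hfd y).differentiableAt)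
  intro y
  rw [(hfd y).fderiv, ← NNReal.coe_le_coe, coe_nnnorm, NNReal.coe_one]
  exact hb y

end
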